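/- Let u, v ∈ k*, z ∈ k and s ∈ k* satisfy 1 − z²u = s²·uv. Fix square roots √u, √v ∈ k̄ and elements α, β ∈ k̄ with α² = (1−z√u)/2 and β² = v(1+z√u)/2. Then the matrices U = [[α, β],[β/v, −α]] and V = [[0, −√v],[1/√v, 0]] are invertible, and they generate a subgroup of GL₂(k̄) of order 8 isomorphic to the dihedral group D8 which is stable under the entrywise action of G_k. -/

import Mathlib

open Matrix

noncomputable section

/-- The absolute Galois group of `k`. -/
abbrev Gk (k : Type*) [Field k] := AlgebraicClosure k ≃ₐ[k] AlgebraicClosure k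

/-- The entrywise Galois action on `GL₂(k̄)`, as a homomorphism to automorphisms. -/
def galHom (k : Type*) [Field k] :
    Gk k →* MulAut (GL (Fin 2) (AlgebraicClosure k)) where
  toFun σ := Units.mapEquiv σ.mapMatrix.toRingEquiv.toMulEquiv
  map_one' := by
    ext M i j
    simp [AlgEquiv.mapMatrix_apply]
  map_mul' σ τ := by
    ext M i j
    simp [AlgEquiv.mapMatrix_apply]

private lemma sq_cases' {F : Type*} [Field F] {a b : F} (h : a ^ 2 = b ^ 2) :
    a = b ∨ a = -b := by
  have h' : (a - b) * (a + b) = 0 := by linear_combination h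
  rcases mul_eq_zero.mp h' with h'' | h''
  · exact Or.inl (sub_eq_zero.mp h'')
  · exact Or.inr (eq_neg_of_add_eq_zero_left h'')

set_option maxHeartbeats 2000000 in
private theorem aux_D8 {F : Type*} [Field F] (h2 : (2 : F) ≠ 0)
    (au av as az : F) (hau : au ≠ 0) (hav : av ≠ 0) (has : as ≠ 0)
    (hidF : 1 - az ^ 2 * au = as ^ 2 * (au * av))
    (su sv α β : F)
    (hsu : su ^ 2 = au) (hsv : sv ^ 2 = av)
    (hα2 : α ^ 2 * 2 = 1 - az * su) (hβ2 : β ^ 2 * 2 = av * (1 + az * su)) :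
    IsUnit !![α, β; β / av, -α] ∧ IsUnit !![(0 : F), -sv; 1 / sv, 0] ∧
    ∃ U V : GL (Fin 2) F,
      (U : Matrix (Fin 2) (Fin 2) F) = !![α, β; β / av, -α] ∧
      (V : Matrix (Fin 2) (Fin 2) F) = !![0, -sv; 1 / sv, 0] ∧
      Nat.card (Subgroup.closure {U, V} : Subgroup (GL (Fin 2) F)) = 8 ∧
      Nonempty ((Subgroup.closure {U, V} : Subgroup (GL (Fin 2) F)) ≃* DihedralGroup 4) ∧
      ∀ σ : F →+* F, σ az = az → σ av = av → σ au = au → σ as = as →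
        ∀ M ∈ Subgroup.closure {U, V},
          Units.map σ.mapMatrix.toMonoidHom M ∈ Subgroup.closure {U, V} := by
  classical
  have hne : 1 - az ^ 2 * au ≠ 0 := by
    rw [hidF]
    exact mul_ne_zero (pow_ne_zero 2 has) (mul_ne_zero hau hav)
  have hsv0 : sv ≠ 0 := by
    intro h; apply hav; rw [← hsv, h]; ring
  have hsu0 : su ≠ 0 := by
    intro h; apply hau; rw [← hsu, h]; ring
  have hsq1 : (az * su) ^ 2 = 1 → False := by
    intro h1
    apply hne
    rw [← hsu]
    linear_combination -h1
  have hα0 : α ≠ 0 := by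
    intro h
    rw [h] at hα2
    apply hsq1
    have hx : az * su = 1 := by linear_combination hα2
    rw [hx]; ring
  have hβ0 : β ≠ 0 := by
    intro h
    rw [h] at hβ2
    have hx : av * (1 + az * su) = 0 := by linear_combination -hβ2
    rcases mul_eq_zero.mp hx with h' | h'
    · exact hav h'
    · apply hsq1
      have : az * su = -1 := by linear_combination h'
      rw [this]; ring
  have h4 : (4 : F) ≠ 0 := by
    intro h; apply h2
    have h' : (2 : F) * 2 = 0 := by rw [show (2 : F) * 2 = 4 by norm_num, h]
    rcases mul_eq_zero.mp h' with h'' | h'' <;> exact h''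
  -- the matrices
  set Um : Matrix (Fin 2) (Fin 2) F := !![α, β; β / av, -α] with hUm
  set Vm : Matrix (Fin 2) (Fin 2) F := !![(0 : F), -sv; 1 / sv, 0] with hVm
  set UVm : Matrix (Fin 2) (Fin 2) F := !![β / sv, -(α * sv); -(α / sv), -(β / sv)] with hUVm
  have hU2m : Um * Um = 1 := by
    rw [hUm, mul_fin_two, one_fin_two]
    ext i j
    fin_cases i <;> fin_cases j <;> simp only [Fin.zero_eta, Fin.mk_one, Matrix.of_apply, Matrix.cons_val', Matrix.cons_val_zero, Matrix.cons_val_one, Matrix.empty_val', Matrix.cons_val_fin_one, Matrix.head_cons] <;> (field_simp; try ring) <;>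
      (apply mul_left_cancel₀ h2; linear_combination av * hα2 + hβ2)
  have hV2m : Vm * Vm = -1 := by
    rw [hVm, mul_fin_two]
    ext i j
    fin_cases i <;> fin_cases j <;> simp only [Fin.zero_eta, Fin.mk_one, Matrix.of_apply, Matrix.cons_val', Matrix.cons_val_zero, Matrix.cons_val_one, Matrix.empty_val', Matrix.cons_val_fin_one, Matrix.head_cons] <;> simp [Matrix.neg_apply, Matrix.one_apply] <;> field_simp
  have hUVmEq : Um * Vm = UVm := by
    rw [hUm, hVm, hUVm, mul_fin_two]
    ext i j
    fin_cases i <;> fin_cases j <;> simp only [Fin.zero_eta, Fin.mk_one, Matrix.of_apply, Matrix.cons_val', Matrix.cons_val_zero, Matrix.cons_val_one, Matrix.empty_val', Matrix.cons_val_fin_one, Matrix.head_cons] <;> (field_simp; try ring)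
    · linear_combination -β * hsv
  have hUV2m : UVm * UVm = 1 := by
    rw [hUVm, mul_fin_two, one_fin_two]
    ext i j
    fin_cases i <;> fin_cases j <;> simp only [Fin.zero_eta, Fin.mk_one, Matrix.of_apply, Matrix.cons_val', Matrix.cons_val_zero, Matrix.cons_val_one, Matrix.empty_val', Matrix.cons_val_fin_one, Matrix.head_cons] <;> (field_simp; try ring) <;>
      (apply mul_left_cancel₀ h2;
        linear_combination hβ2 + sv ^ 2 * hα2 - (1 + az * su) * hsv)
  have hVm4 : Vm ^ 4 = 1 := by
    rw [show (4 : ℕ) = 2 * 2 from rfl, pow_mul, sq, sq, hV2m]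
    norm_num
  have hVm3 : Vm ^ 3 = -Vm := by
    rw [pow_succ, sq, hV2m, neg_one_mul]
  have mkUnit : ∀ X Y : Matrix (Fin 2) (Fin 2) F, X * Y = 1 → IsUnit X :=
    fun X Y hXY => ⟨⟨X, Y, hXY, mul_eq_one_comm.mp hXY⟩, rfl⟩
  have hU : IsUnit Um := mkUnit _ _ hU2m
  have hV : IsUnit Vm := mkUnit _ _ (show Vm * (-Vm) = 1 by
    rw [mul_neg, hV2m, neg_neg])
  refine ⟨hU, hV, ?_⟩
  set Ug : GL (Fin 2) F := hU.unit with hUg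
  set Vg : GL (Fin 2) F := hV.unit with hVg
  have hUgv : (Ug : Matrix (Fin 2) (Fin 2) F) = Um := hU.unit_spec
  have hVgv : (Vg : Matrix (Fin 2) (Fin 2) F) = Vm := hV.unit_spec
  refine ⟨Ug, Vg, hUgv, hVgv, ?_⟩
  -- unit-level relations
  have hU2 : Ug * Ug = 1 := Units.ext (by rw [Units.val_mul, hUgv, hU2m, Units.val_one])
  have hVV : ((Vg * Vg : GL (Fin 2) F) : Matrix (Fin 2) (Fin 2) F) = -1 := by
    rw [Units.val_mul, hVgv, hV2m]
  have hV4 : Vg ^ 4 = 1 := Units.ext (by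
    rw [Units.val_pow_eq_pow_val, hVgv, hVm4, Units.val_one])
  have hUVg : ((Ug * Vg : GL (Fin 2) F) : Matrix (Fin 2) (Fin 2) F) = UVm := by
    rw [Units.val_mul, hUgv, hVgv, hUVmEq]
  have hUV2 : (Ug * Vg) * (Ug * Vg) = 1 := Units.ext (by
    rw [Units.val_mul, hUVg, hUV2m, Units.val_one])
  have hrel : Ug * Vg = Vg⁻¹ * Ug := by
    have ha : Ug * Vg = (Ug * Vg)⁻¹ := eq_inv_of_mul_eq_one_left hUV2
    have hb : Ug⁻¹ = Ug := inv_eq_of_mul_eq_one_left hU2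
    rw [ha, _root_.mul_inv_rev, hb]
  have hsc : ∀ n : ℕ, Ug * Vg ^ n = (Vg ^ n)⁻¹ * Ug := by
    intro n
    induction n with
    | zero => rw [pow_zero, inv_one, one_mul, mul_one]
    | succ m ih =>
        rw [pow_succ, ← mul_assoc, ih, mul_assoc, hrel, ← mul_assoc, ← _root_.mul_inv_rev,
          ← pow_mul_comm']
  set pw : ZMod 4 → GL (Fin 2) F := fun i => Vg ^ i.val with hpw
  have hpw0 : pw 0 = 1 := by simp [hpw]
  have hpwadd : ∀ a b : ZMod 4, pw (a + b) = pw a * pw b := by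
    intro a b
    show Vg ^ (a + b).val = Vg ^ a.val * Vg ^ b.val
    rw [ZMod.val_add, ← pow_eq_pow_mod _ hV4, pow_add]
  have hpwneg : ∀ a : ZMod 4, pw (-a) = (pw a)⁻¹ := by
    intro a
    apply eq_inv_of_mul_eq_one_left
    rw [← hpwadd, neg_add_cancel, hpw0]
  have hpwU : ∀ a : ZMod 4, pw a * Ug = Ug * pw (-a) := by
    intro a
    have h' : Ug * pw (-a) = (pw (-a))⁻¹ * Ug := hsc (-a : ZMod 4).val
    rw [hpwneg, inv_inv] at h'
    rw [hpwneg]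
    exact h'.symm
  -- the homomorphism from the dihedral group
  set fraw : DihedralGroup 4 → GL (Fin 2) F := fun x =>
    match x with
    | DihedralGroup.r i => pw i
    | DihedralGroup.sr i => Ug * pw i
    with hfraw
  have hmul : ∀ a b : DihedralGroup 4, fraw (a * b) = fraw a * fraw b := by
    rintro (i | i) (j | j)
    · rw [DihedralGroup.r_mul_r]
      exact hpwadd i j
    · rw [DihedralGroup.r_mul_sr]
      show Ug * pw (j - i) = pw i * (Ug * pw j)
      rw [← mul_assoc, hpwU, mul_assoc, ← hpwadd, sub_eq_neg_add]
    · rw [DihedralGroup.sr_mul_r]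
      show Ug * pw (i + j) = Ug * pw i * pw j
      rw [hpwadd, mul_assoc]
    · rw [DihedralGroup.sr_mul_sr]
      show pw (j - i) = Ug * pw i * (Ug * pw j)
      rw [mul_assoc Ug (pw i), ← mul_assoc (pw i), hpwU, ← mul_assoc, ← mul_assoc, hU2,
        one_mul, ← hpwadd, sub_eq_neg_add]
  set f : DihedralGroup 4 →* GL (Fin 2) F := MonoidHom.mk' fraw hmul with hf
  -- injectivity
  have hvalcases : ∀ i : ZMod 4, i.val = 0 ∨ i.val = 1 ∨ i.val = 2 ∨ i.val = 3 := by
    intro i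
    have := ZMod.val_lt i
    omega
  have hVmne1 : Vm ≠ 1 := by
    intro h
    apply hsv0
    have := congrFun (congrFun h 0) 1
    rw [hVm] at this
    simpa [one_fin_two] using this
  have hneg1ne1 : (-1 : Matrix (Fin 2) (Fin 2) F) ≠ 1 := by
    intro h
    apply h2
    have := congrFun (congrFun h 0) 0
    rw [one_fin_two] at this
    simp at this
    linear_combination -this
  have hdiag : ∀ X : Matrix (Fin 2) (Fin 2) F, X 0 0 = - X 1 1 → X ≠ 1 := by
    intro X hX h
    apply h2
    have h00 := congrFun (congrFun h 0) 0
    have h11 := congrFun (congrFun h 1) 1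
    rw [one_fin_two] at h00 h11
    simp at h00 h11
    rw [hX, h11] at h00
    linear_combination -h00
  have hinj : Function.Injective f := by
    rw [injective_iff_map_eq_one]
    rintro (i | i) hx
    · -- rotation case
      have hxm : Vm ^ i.val = 1 := by
        have hx' : Vg ^ i.val = 1 := hx
        have h' := congrArg Units.val hx'
        rw [Units.val_one, Units.val_pow_eq_pow_val, hVgv] at h'
        exact h'
      rcases hvalcases i with h | h | h | h
      · have h0 : i = 0 := (ZMod.val_eq_zero i).mp h
        rw [h0]; rfl
      · rw [h, pow_one] at hxm
        exact absurd hxm hVmne1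
      · rw [h, sq, hV2m] at hxm
        exact absurd hxm hneg1ne1
      · rw [h, hVm3] at hxm
        exfalso
        apply hsv0
        have := congrFun (congrFun hxm 0) 1
        rw [hVm] at this
        simpa [one_fin_two] using this
    · -- reflection case: always a contradiction
      exfalso
      have hxm : Um * Vm ^ i.val = 1 := by
        have hx' : Ug * Vg ^ i.val = 1 := hx
        have h' := congrArg Units.val hx'
        rw [Units.val_one, Units.val_mul, hUgv, Units.val_pow_eq_pow_val, hVgv] at h'
        exact h'
      rcases hvalcases i with h | h | h | h <;> rw [h] at hxm
      · rw [pow_zero, mul_one] at hxm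
        exact hdiag Um (by rw [hUm]; simp) hxm
      · rw [pow_one, hUVmEq] at hxm
        exact hdiag UVm (by rw [hUVm]; simp) hxm
      · rw [sq, hV2m, mul_neg, mul_one] at hxm
        exact hdiag (-Um) (by rw [hUm]; simp) hxm
      · rw [hVm3, mul_neg, hUVmEq] at hxm
        exact hdiag (-UVm) (by rw [hUVm]; simp) hxm
  -- range equals the closure
  have hUmem : Ug ∈ Subgroup.closure ({Ug, Vg} : Set (GL (Fin 2) F)) :=
    Subgroup.subset_closure (Set.mem_insert _ _)
  have hVmem : Vg ∈ Subgroup.closure ({Ug, Vg} : Set (GL (Fin 2) F)) :=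
    Subgroup.subset_closure (Set.mem_insert_of_mem _ rfl)
  have hrange : f.range = Subgroup.closure ({Ug, Vg} : Set (GL (Fin 2) F)) := by
    apply le_antisymm
    · rintro x ⟨y, rfl⟩
      rcases y with i | i
      · exact pow_mem hVmem _
      · exact mul_mem hUmem (pow_mem hVmem _)
    · rw [Subgroup.closure_le]
      rintro x hx
      simp only [Set.mem_insert_iff, Set.mem_singleton_iff] at hx
      rcases hx with rfl | rfl
      · exact ⟨DihedralGroup.sr 0, by show Ug * pw 0 = Ug; rw [hpw0, mul_one]⟩
      · refine ⟨DihedralGroup.r 1, ?_⟩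
        show Vg ^ (1 : ZMod 4).val = Vg
        rw [show (1 : ZMod 4).val = 1 from rfl, pow_one]
  have hequiv : (Subgroup.closure ({Ug, Vg} : Set (GL (Fin 2) F))) ≃* DihedralGroup 4 :=
    ((MonoidHom.ofInjective hinj).trans (MulEquiv.subgroupCongr hrange)).symm
  have hcard : Nat.card (Subgroup.closure ({Ug, Vg} : Set (GL (Fin 2) F))) = 8 := by
    rw [Nat.card_congr hequiv.toEquiv, DihedralGroup.nat_card]
  refine ⟨hcard, ⟨hequiv⟩, ?_⟩
  -- stability under ring endomorphisms fixing the data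
  intro σ hz hvfix hufix hsfix M hM
  have hgalv : ∀ N : GL (Fin 2) F,
      ((Units.map σ.mapMatrix.toMonoidHom N : GL (Fin 2) F) : Matrix (Fin 2) (Fin 2) F) =
        (N : Matrix (Fin 2) (Fin 2) F).map σ := fun N => rfl
  -- behavior on V
  have hσsv : σ sv = sv ∨ σ sv = -sv := by
    apply sq_cases'
    rw [← map_pow, hsv, hvfix]
  have hVstab : Units.map σ.mapMatrix.toMonoidHom Vg ∈
      Subgroup.closure ({Ug, Vg} : Set (GL (Fin 2) F)) := by
    rcases hσsv with h | h
    · have heq : Units.map σ.mapMatrix.toMonoidHom Vg = Vg := by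
        apply Units.ext
        rw [hgalv, hVgv, hVm]
        ext i j
        fin_cases i <;> fin_cases j <;>
          simp [Matrix.map_apply, map_div₀, h]
      rw [heq]
      exact hVmem
    · have heq : Units.map σ.mapMatrix.toMonoidHom Vg = Vg * Vg * Vg := by
        apply Units.ext
        rw [hgalv, hVgv, Units.val_mul, hVV, neg_one_mul, hVgv, hVm]
        ext i j
        fin_cases i <;> fin_cases j <;>
          simp [Matrix.map_apply, map_div₀, h, inv_neg]
      rw [heq]
      exact mul_mem (mul_mem hVmem hVmem) hVmem
  -- behavior on U
  have hσsu : σ su = su ∨ σ su = -su := by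
    apply sq_cases'
    rw [← map_pow, hsu, hufix]
  have hc : (2 * (α * β)) ^ 2 = (as * av * su) ^ 2 := by
    linear_combination (2 * β ^ 2) * hα2 + (1 - az * su) * hβ2 -
      (as ^ 2 * av ^ 2 + av * az ^ 2) * hsu + av * hidF
  have hσα2 := congrArg σ hα2
  rw [_root_.map_mul, map_pow, map_ofNat, map_sub, _root_.map_one, _root_.map_mul, hz] at hσα2
  have hσβ2 := congrArg σ hβ2
  rw [_root_.map_mul, map_pow, map_ofNat, _root_.map_mul, map_add, _root_.map_one, _root_.map_mul,
    hz, hvfix] at hσβ2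
  have hαβ0 : α * β ≠ 0 := mul_ne_zero hα0 hβ0
  have hUstab : Units.map σ.mapMatrix.toMonoidHom Ug ∈
      Subgroup.closure ({Ug, Vg} : Set (GL (Fin 2) F)) := by
    rcases hσsu with hσu | hσu
    · -- σ fixes √u : σU = ±U
      rw [hσu] at hσα2 hσβ2
      have ha := sq_cases' (show (σ α) ^ 2 = α ^ 2 by
        apply mul_left_cancel₀ h2; linear_combination hσα2 - hα2)
      have hb := sq_cases' (show (σ β) ^ 2 = β ^ 2 by
        apply mul_left_cancel₀ h2; linear_combination hσβ2 - hβ2)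
      have hσc : σ (2 * (α * β)) = 2 * (α * β) := by
        rcases sq_cases' hc with hpc | hpc
        · rw [hpc, _root_.map_mul, _root_.map_mul, hsfix, hvfix, hσu]
        · rw [hpc, map_neg, _root_.map_mul, _root_.map_mul, hsfix, hvfix, hσu]
      rw [_root_.map_mul, map_ofNat, _root_.map_mul] at hσc
      rcases ha with ha | ha <;> rcases hb with hb | hb
      · have heq : Units.map σ.mapMatrix.toMonoidHom Ug = Ug := by
          apply Units.ext
          rw [hgalv, hUgv, hUm]
          ext i j
          fin_cases i <;> fin_cases j <;>
            simp [Matrix.map_apply, map_div₀, ha, hb, hvfix]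
        rw [heq]; exact hUmem
      · exfalso
        rw [ha, hb] at hσc
        apply hαβ0
        apply mul_left_cancel₀ h4
        rw [mul_zero]
        linear_combination -hσc
      · exfalso
        rw [ha, hb] at hσc
        apply hαβ0
        apply mul_left_cancel₀ h4
        rw [mul_zero]
        linear_combination -hσc
      · have heq : Units.map σ.mapMatrix.toMonoidHom Ug = Vg * Vg * Ug := by
          apply Units.ext
          rw [hgalv, hUgv, Units.val_mul, hVV, neg_one_mul, hUgv, hUm]
          ext i j
          fin_cases i <;> fin_cases j <;>
            simp [Matrix.map_apply, map_div₀, ha, hb, hvfix, neg_div]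
        rw [heq]; exact mul_mem (mul_mem hVmem hVmem) hUmem
    · -- σ(√u) = -√u : σU = ±UV
      rw [hσu] at hσα2 hσβ2
      have ha := sq_cases' (show (σ α * sv) ^ 2 = β ^ 2 by
        apply mul_left_cancel₀ h2
        linear_combination sv ^ 2 * hσα2 - hβ2 + (1 + az * su) * hsv)
      have hb := sq_cases' (show (σ β) ^ 2 = (α * sv) ^ 2 by
        apply mul_left_cancel₀ h2
        linear_combination hσβ2 - sv ^ 2 * hα2 - (1 - az * su) * hsv)
      have hσc : σ (2 * (α * β)) = -(2 * (α * β)) := by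
        rcases sq_cases' hc with hpc | hpc
        · rw [hpc, _root_.map_mul, _root_.map_mul, hsfix, hvfix, hσu]; ring
        · rw [hpc, map_neg, _root_.map_mul, _root_.map_mul, hsfix, hvfix, hσu]; ring
      rw [_root_.map_mul, map_ofNat, _root_.map_mul] at hσc
      rcases ha with ha | ha <;> rcases hb with hb | hb
      · exfalso
        apply hαβ0
        have h4sv : (4 : F) * sv ≠ 0 := mul_ne_zero h4 hsv0
        apply mul_left_cancel₀ h4sv
        rw [mul_zero]
        linear_combination sv * hσc - 2 * (σ β) * ha - 2 * β * hb
      · have hα' : σ α = β / sv := by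
          field_simp
          linear_combination ha
        have heq : Units.map σ.mapMatrix.toMonoidHom Ug = Ug * Vg := by
          apply Units.ext
          rw [hgalv, hUVg, hUgv, hUm, hUVm]
          ext i j
          fin_cases i <;> fin_cases j
          · simp [Matrix.map_apply, hα']
          · simp [Matrix.map_apply, hb]
          · simp [Matrix.map_apply, map_div₀, hb, hvfix]
            field_simp
            linear_combination -hsv
          · simp [Matrix.map_apply, hα']
        rw [heq]; exact mul_mem hUmem hVmem
      · have hα' : σ α = -(β / sv) := by
          field_simp
          linear_combination ha
        have heq : Units.map σ.mapMatrix.toMonoidHom Ug = Vg * Vg * (Ug * Vg) := by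
          apply Units.ext
          rw [hgalv, Units.val_mul, hVV, neg_one_mul, hUVg, hUgv, hUm, hUVm]
          ext i j
          fin_cases i <;> fin_cases j
          · simp [Matrix.map_apply, hα']
          · simp [Matrix.map_apply, hb]
          · simp [Matrix.map_apply, map_div₀, hb, hvfix]
            field_simp
            linear_combination hsv
          · simp [Matrix.map_apply, hα']
        rw [heq]; exact mul_mem (mul_mem hVmem hVmem) (mul_mem hUmem hVmem)
      · exfalso
        apply hαβ0
        have h4sv : (4 : F) * sv ≠ 0 := mul_ne_zero h4 hsv0
        apply mul_left_cancel₀ h4sv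
        rw [mul_zero]
        linear_combination sv * hσc - 2 * (σ β) * ha + 2 * β * hb
  -- conclude by closure induction
  refine Subgroup.closure_induction ?_ ?_ ?_ ?_ hM
  · intro x hx
    simp only [Set.mem_insert_iff, Set.mem_singleton_iff] at hx
    rcases hx with rfl | rfl
    · exact hUstab
    · exact hVstab
  · rw [_root_.map_one]; exact one_mem _
  · intro x y hx hy px py
    rw [_root_.map_mul]; exact mul_mem px py
  · intro x hx px
    rw [map_inv]; exact inv_mem px

/-- Proposition 3, converse half, of Cardona–Quer.
Let `u, v ∈ k*`, `z ∈ k`, `s ∈ k*` satisfy `1 − z²u = s²·uv`; fix square roots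
`√u, √v ∈ k̄` and `α, β ∈ k̄` with `α² = (1−z√u)/2`, `β² = v(1+z√u)/2`.  Then the matrices
`U = [[α, β],[β/v, −α]]` and `V = [[0, −√v],[1/√v, 0]]` are invertible and generate a
subgroup of `GL₂(k̄)` of order 8, isomorphic to `D8`, stable under the entrywise
Galois action. -/
theorem matrices_generate_galoisStable_D8 {k : Type*} [Field k] [PerfectField k]
    (hchar : (2 : k) ≠ 0)
    (u v : k) (hu : u ≠ 0) (hv : v ≠ 0)
    (z s : k) (hs : s ≠ 0) (hid : 1 - z ^ 2 * u = s ^ 2 * (u * v))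
    (su sv α β : AlgebraicClosure k)
    (hsu : su ^ 2 = algebraMap k (AlgebraicClosure k) u)
    (hsv : sv ^ 2 = algebraMap k (AlgebraicClosure k) v)
    (hα : α ^ 2 = (1 - algebraMap k (AlgebraicClosure k) z * su) / 2)
    (hβ : β ^ 2 = algebraMap k (AlgebraicClosure k) v *
      (1 + algebraMap k (AlgebraicClosure k) z * su) / 2) :
    IsUnit !![α, β; β / algebraMap k (AlgebraicClosure k) v, -α] ∧
    IsUnit !![(0 : AlgebraicClosure k), -sv; 1 / sv, 0] ∧
    ∃ U V : GL (Fin 2) (AlgebraicClosure k),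
      (U : Matrix (Fin 2) (Fin 2) (AlgebraicClosure k)) =
        !![α, β; β / algebraMap k (AlgebraicClosure k) v, -α] ∧
      (V : Matrix (Fin 2) (Fin 2) (AlgebraicClosure k)) =
        !![0, -sv; 1 / sv, 0] ∧
      Nat.card (Subgroup.closure {U, V} : Subgroup (GL (Fin 2) (AlgebraicClosure k))) = 8 ∧
      Nonempty ((Subgroup.closure {U, V} : Subgroup (GL (Fin 2) (AlgebraicClosure k))) ≃*
        DihedralGroup 4) ∧
      ∀ σ : Gk k, ∀ M ∈ Subgroup.closure {U, V}, galHom k σ M ∈ Subgroup.closure {U, V} := by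
  have hinjA : Function.Injective (algebraMap k (AlgebraicClosure k)) :=
    (algebraMap k (AlgebraicClosure k)).injective
  have h2 : (2 : AlgebraicClosure k) ≠ 0 := by
    intro h
    apply hchar
    apply hinjA
    rw [map_ofNat, map_zero]
    exact h
  have huK : algebraMap k (AlgebraicClosure k) u ≠ 0 :=
    fun h => hu (hinjA (by rw [h, map_zero]))
  have hvK : algebraMap k (AlgebraicClosure k) v ≠ 0 :=
    fun h => hv (hinjA (by rw [h, map_zero]))
  have hsK : algebraMap k (AlgebraicClosure k) s ≠ 0 :=
    fun h => hs (hinjA (by rw [h, map_zero]))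
  have hidK : 1 - (algebraMap k (AlgebraicClosure k) z) ^ 2 * algebraMap k (AlgebraicClosure k) u
      = (algebraMap k (AlgebraicClosure k) s) ^ 2 *
        (algebraMap k (AlgebraicClosure k) u * algebraMap k (AlgebraicClosure k) v) := by
    have := congrArg (algebraMap k (AlgebraicClosure k)) hid
    simpa using this
  have hα2 : α ^ 2 * 2 = 1 - algebraMap k (AlgebraicClosure k) z * su := by
    rw [hα, div_mul_cancel₀ _ h2]
  have hβ2 : β ^ 2 * 2 = algebraMap k (AlgebraicClosure k) v *
      (1 + algebraMap k (AlgebraicClosure k) z * su) := by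
    rw [hβ, div_mul_cancel₀ _ h2]
  obtain ⟨hU, hV, Ug, Vg, hUgv, hVgv, hcard, hnequiv, hstab⟩ :=
    aux_D8 h2 (algebraMap k (AlgebraicClosure k) u) (algebraMap k (AlgebraicClosure k) v)
      (algebraMap k (AlgebraicClosure k) s) (algebraMap k (AlgebraicClosure k) z)
      huK hvK hsK hidK su sv α β hsu hsv hα2 hβ2
  refine ⟨hU, hV, Ug, Vg, hUgv, hVgv, hcard, hnequiv, ?_⟩
  intro σ M hM
  have key := hstab (σ : AlgebraicClosure k →+* AlgebraicClosure k)
    (σ.commutes z) (σ.commutes v) (σ.commutes u) (σ.commutes s) M hM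
  have : galHom k σ M =
      Units.map ((σ : AlgebraicClosure k →+* AlgebraicClosure k)).mapMatrix.toMonoidHom M := by
    apply Units.ext
    rfl
  rw [this]
  exact key

end
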